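/- arXiv:2412.02489 — 2 statements merged into one kernel-verified Lean document; each statement's English description precedes it below -/
import Mathlib

section
/- Let ψ₁,…,ψₘ : Ω → ℂ be orthonormal with respect to a probability measure μ on Ω and ψ(x) = (ψ₁(x),…,ψₘ(x))ᵀ. Then for every ε > 0 there exist M ∈ ℕ and points x₁,…,x_M ∈ Ω such that det((1/M) ∑_{i=1}^M ψ(x_i)·ψ(x_i)*) ≥ 1 − ε. -/
open MeasureTheory Matrix

section Aux

/-- Pointwise expansion of the determinant of a sum of rank-one matrices. -/
lemma det_sum_vecMulVec {m M : ℕ} (a b : Fin M → Fin m → ℂ) :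
    (∑ i : Fin M, Matrix.vecMulVec (a i) (b i)).det =
      ∑ r ∈ Finset.univ.filter (Function.Injective : (Fin m → Fin M) → Prop),
        (∏ k, a (r k) k) * (Matrix.of fun k l => b (r k) l).det := by
  classical
  have hrow : (∑ i : Fin M, Matrix.vecMulVec (a i) (b i)) =
      fun k => ∑ i : Fin M, a i k • b i := by
    funext k l
    simp [Matrix.vecMulVec, Matrix.sum_apply, Finset.sum_apply, smul_eq_mul]
  have h1 : (∑ i : Fin M, Matrix.vecMulVec (a i) (b i)).det
      = ∑ r : Fin m → Fin M, (∏ k, a (r k) k) •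
          Matrix.detRowAlternating (fun k => b (r k)) := by
    show Matrix.detRowAlternating _ = _
    rw [hrow]
    rw [show ⇑(Matrix.detRowAlternating (R := ℂ) (n := Fin m))
        = ⇑((Matrix.detRowAlternating (R := ℂ) (n := Fin m)).toMultilinearMap) from rfl]
    rw [(Matrix.detRowAlternating (R := ℂ) (n := Fin m)).toMultilinearMap.map_sum
      (g := fun k i => a i k • b i)]
    apply Finset.sum_congr rfl
    intro r _
    exact (Matrix.detRowAlternating (R := ℂ) (n := Fin m)).toMultilinearMap.map_smul_univ
      (fun k => a (r k) k) (fun k => b (r k))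
  rw [h1]
  rw [← Finset.sum_filter_add_sum_filter_not Finset.univ
    (Function.Injective : (Fin m → Fin M) → Prop)]
  have h2 : ∑ r ∈ Finset.univ.filter
      (fun r => ¬ (Function.Injective : (Fin m → Fin M) → Prop) r),
      (∏ k, a (r k) k) • Matrix.detRowAlternating (fun k => b (r k)) = 0 := by
    apply Finset.sum_eq_zero
    intro r hr
    rw [Finset.mem_filter] at hr
    obtain ⟨k, k', hkk', hne⟩ : ∃ k k', r k = r k' ∧ k ≠ k' := by
      simpa [Function.Injective] using hr.2
    rw [Matrix.detRowAlternating.map_eq_zero_of_eq _ (by rw [hkk']) hne, smul_zero]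
  rw [h2, add_zero]
  apply Finset.sum_congr rfl
  intro r _
  rw [smul_eq_mul]
  rfl

/-- For an injective selection of coordinates, the corresponding term is
integrable with integral `1`. -/
lemma integral_one_term {Ω : Type*} [MeasureSpace Ω]
    [IsProbabilityMeasure (volume : Measure Ω)]
    {m : ℕ} (ψ : Fin m → Ω → ℂ) (hmeas : ∀ k, Measurable (ψ k))
    (horth : ∀ k l, ∫ y, ψ k y * star (ψ l y) = if k = l then 1 else 0)
    {M : ℕ} (r : Fin m → Fin M) (hr : Function.Injective r) :
    Integrable (fun x : Fin M → Ω =>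
        (∏ k, ψ k (x (r k))) * (Matrix.of fun k l => star (ψ l (x (r k)))).det) ∧
    (∫ x : Fin M → Ω,
        (∏ k, ψ k (x (r k))) * (Matrix.of fun k l => star (ψ l (x (r k)))).det) = 1 := by
  classical
  have hkk : ∀ k : Fin m, Integrable (fun y => ψ k y * star (ψ k y)) := by
    intro k
    by_contra h
    have h1 := horth k k
    rw [if_pos rfl, integral_undef h] at h1
    exact zero_ne_one h1
  have hsq : ∀ k l : Fin m, Integrable (fun y => ψ k y * star (ψ l y)) := by
    intro k l
    refine Integrable.mono' (((hkk k).norm.add (hkk l).norm).const_mul (1/2))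
      (((hmeas k).mul (continuous_star.measurable.comp (hmeas l))).aestronglyMeasurable)
      (Filter.Eventually.of_forall fun y => ?_)
    simp only [Pi.add_apply, norm_mul, norm_star]
    nlinarith [sq_nonneg (‖ψ k y‖ - ‖ψ l y‖), norm_nonneg (ψ k y), norm_nonneg (ψ l y)]
  set G : Equiv.Perm (Fin m) → Fin m → Ω → ℂ :=
    fun σ k y => ψ k y * star (ψ (σ⁻¹ k) y) with hGdef
  set H : Equiv.Perm (Fin m) → Fin M → Ω → ℂ :=
    fun σ i => if h : ∃ k, r k = i then G σ h.choose else fun _ => 1 with hHdef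
  have hHr : ∀ σ k, H σ (r k) = G σ k := by
    intro σ k
    have hex : ∃ k', r k' = r k := ⟨k, rfl⟩
    simp only [hHdef, dif_pos hex]
    rw [hr hex.choose_spec]
  have hHint : ∀ σ i, Integrable (H σ i) := by
    intro σ i
    by_cases h : ∃ k, r k = i
    · simp only [hHdef, dif_pos h]; exact hsq _ _
    · simp only [hHdef, dif_neg h]; exact integrable_const 1
  have hHval : ∀ σ k, (∫ y, H σ (r k) y) = if k = σ⁻¹ k then 1 else 0 := by
    intro σ k
    rw [hHr]
    exact horth k (σ⁻¹ k)
  have hpoint : ∀ x : Fin M → Ω,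
      (∏ k, ψ k (x (r k))) * (Matrix.of fun k l => star (ψ l (x (r k)))).det
      = ∑ σ : Equiv.Perm (Fin m),
          ((Equiv.Perm.sign σ : ℤ) : ℂ) * ∏ i : Fin M, H σ i (x i) := by
    intro x
    rw [Matrix.det_apply', Finset.mul_sum]
    apply Finset.sum_congr rfl
    intro σ _
    have h1 : (∏ i, (Matrix.of fun k l => star (ψ l (x (r k)))) (σ i) i)
        = ∏ k, star (ψ (σ⁻¹ k) (x (r k))) := by
      rw [← Equiv.prod_comp σ (fun k => star (ψ (σ⁻¹ k) (x (r k))))]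
      simp
    have h2 : (∏ k, ψ k (x (r k))) * ∏ k, star (ψ (σ⁻¹ k) (x (r k)))
        = ∏ i, H σ i (x i) := by
      rw [← Finset.prod_mul_distrib]
      have he : ∀ k ∈ Finset.univ, ψ k (x (r k)) * star (ψ (σ⁻¹ k) (x (r k)))
          = H σ (r k) (x (r k)) := fun k _ => by rw [hHr]
      have himg : ∏ i ∈ Finset.univ.image r, H σ i (x i)
          = ∏ k, H σ (r k) (x (r k)) :=
        Finset.prod_image (fun k _ k' _ h => hr h)
      rw [Finset.prod_congr rfl he, ← himg]
      apply Finset.prod_subset (Finset.subset_univ _)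
      intro i _ hi
      have hno : ¬ ∃ k, r k = i := by
        rintro ⟨k, hk⟩
        exact hi (Finset.mem_image.2 ⟨k, Finset.mem_univ k, hk⟩)
      simp [hHdef, dif_neg hno]
    rw [h1]
    calc (∏ k, ψ k (x (r k))) * (((Equiv.Perm.sign σ : ℤ) : ℂ) *
          ∏ k, star (ψ (σ⁻¹ k) (x (r k))))
        = ((Equiv.Perm.sign σ : ℤ) : ℂ) * ((∏ k, ψ k (x (r k))) *
          ∏ k, star (ψ (σ⁻¹ k) (x (r k)))) := by ring
      _ = _ := by rw [h2]
  constructor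
  · rw [funext hpoint]
    exact integrable_finset_sum _ fun σ _ =>
      (Integrable.fintype_prod (fun i => hHint σ i)).const_mul _
  · rw [funext hpoint, integral_finset_sum (μ := (volume : Measure (Fin M → Ω))) _ fun σ _ =>
      (Integrable.fintype_prod (fun i => hHint σ i)).const_mul _]
    have hprod : ∀ σ : Equiv.Perm (Fin m),
        (∫ x : Fin M → Ω, ∏ i, H σ i (x i)) = if σ = 1 then 1 else 0 := by
      intro σ
      rw [MeasureTheory.integral_fintype_prod_volume_eq_prod (H σ)]
      by_cases hσ : σ = 1
      · subst hσ
        rw [if_pos rfl]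
        apply Finset.prod_eq_one
        intro i _
        by_cases h : ∃ k, r k = i
        · obtain ⟨k, rfl⟩ := h
          rw [hHval]
          simp
        · simp only [hHdef, dif_neg h]
          simp
      · rw [if_neg hσ]
        obtain ⟨k, hk⟩ : ∃ k, σ k ≠ k := by
          by_contra hall
          push_neg at hall
          exact hσ (Equiv.ext hall)
        apply Finset.prod_eq_zero (Finset.mem_univ (r (σ k)))
        rw [hHval σ (σ k)]
        simp [hk]
    have hterm : ∀ σ ∈ (Finset.univ : Finset (Equiv.Perm (Fin m))),
        (∫ x : Fin M → Ω, ((Equiv.Perm.sign σ : ℤ) : ℂ) * ∏ i, H σ i (x i))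
        = if σ = 1 then ((Equiv.Perm.sign σ : ℤ) : ℂ) else 0 := by
      intro σ _
      rw [integral_const_mul _ _, hprod]
      by_cases hσ : σ = 1 <;> simp [hσ]
    rw [Finset.sum_congr rfl hterm]
    simp

end Aux

lemma card_injective_eq {m M : ℕ} :
    (Finset.univ.filter (Function.Injective : (Fin m → Fin M) → Prop)).card
      = M.descFactorial m := by
  classical
  rw [← Fintype.card_subtype,
    Fintype.card_congr (Equiv.subtypeInjectiveEquivEmbedding (Fin m) (Fin M))]
  simp [Fintype.card_embedding_eq]

lemma descFactorial_div_tendsto (m : ℕ) :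
    Filter.Tendsto (fun M : ℕ => ((M.descFactorial m : ℝ) / (M : ℝ) ^ m))
      Filter.atTop (nhds 1) := by
  have hfun : ∀ M : ℕ, ((M.descFactorial m : ℝ) / (M : ℝ) ^ m)
      = ∏ j ∈ Finset.range m, (((M - j : ℕ) : ℝ) / (M : ℝ)) := by
    intro M
    rw [Nat.descFactorial_eq_prod_range, Finset.prod_div_distrib]
    push_cast
    rw [Finset.prod_const]
    congr 1
    simp [Finset.card_range]
  have h1 : ∀ j : ℕ, Filter.Tendsto (fun M : ℕ => (((M - j : ℕ) : ℝ) / (M : ℝ)))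
      Filter.atTop (nhds 1) := by
    intro j
    have h2 : Filter.Tendsto (fun M : ℕ => 1 - (j : ℝ) / (M : ℝ))
        Filter.atTop (nhds 1) := by
      simpa using tendsto_const_nhds.sub (tendsto_const_div_atTop_nhds_zero_nat (j : ℝ))
    apply h2.congr'
    filter_upwards [Filter.eventually_ge_atTop (j + 1)] with M hM
    have hM0 : (0 : ℝ) < M := by
      have : 0 < M := Nat.lt_of_lt_of_le j.succ_pos hM
      exact_mod_cast this
    rw [Nat.cast_sub (Nat.le_of_succ_le hM)]
    field_simp
  have := tendsto_finset_prod (Finset.range m)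
    (fun j _ => h1 j)
  simp only [Finset.prod_const_one] at this
  exact (funext hfun : _ = _) ▸ this

/-- For an orthonormal system w.r.t. a probability measure, the determinant of the
rescaled empirical Gramian can be made `≥ 1 - ε` by a suitable choice of points. -/
theorem stmt_1 {Ω : Type*} [MeasurableSpace Ω] (μ : Measure Ω) [IsProbabilityMeasure μ]
    (m : ℕ) (ψ : Fin m → Ω → ℂ)
    (hmeas : ∀ k, Measurable (ψ k))
    (horth : ∀ k l, ∫ x, ψ k x * star (ψ l x) ∂μ = if k = l then 1 else 0)
    (ε : ℝ) (hε : 0 < ε) :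
    ∃ (M : ℕ) (x : Fin M → Ω),
      1 - ε ≤
        (Matrix.det ((M : ℂ)⁻¹ •
          ∑ i : Fin M, Matrix.vecMulVec (fun k => ψ k (x i)) (fun l => star (ψ l (x i))))).re := by
  classical
  letI : MeasureSpace Ω := ⟨μ⟩
  have hPΩ : IsProbabilityMeasure (volume : Measure Ω) := ‹IsProbabilityMeasure μ›
  -- choose M
  obtain ⟨M, hMc⟩ : ∃ M : ℕ,
      1 - ε < ((M.descFactorial m : ℝ) / (M : ℝ) ^ m) := by
    have h := (descFactorial_div_tendsto m).eventually
      (lt_mem_nhds (show 1 - ε < 1 by linarith))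
    exact h.exists
  refine ⟨M, ?_⟩
  set S : (Fin M → Ω) → Matrix (Fin m) (Fin m) ℂ := fun x =>
    ∑ i : Fin M, Matrix.vecMulVec (fun k => ψ k (x i)) (fun l => star (ψ l (x i)))
    with hSdef
  have hdet : ∀ x : Fin M → Ω, (S x).det =
      ∑ r ∈ Finset.univ.filter (Function.Injective : (Fin m → Fin M) → Prop),
        (∏ k, ψ k (x (r k))) * (Matrix.of fun k l => star (ψ l (x (r k)))).det :=
    fun x => det_sum_vecMulVec _ _
  have hterm : ∀ r ∈ Finset.univ.filter
      (Function.Injective : (Fin m → Fin M) → Prop),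
      Integrable (fun x : Fin M → Ω =>
        (∏ k, ψ k (x (r k))) * (Matrix.of fun k l => star (ψ l (x (r k)))).det) ∧
      (∫ x : Fin M → Ω,
        (∏ k, ψ k (x (r k))) * (Matrix.of fun k l => star (ψ l (x (r k)))).det) = 1 := by
    intro r hrin
    exact integral_one_term ψ hmeas horth r (Finset.mem_filter.1 hrin).2
  have hint : Integrable (fun x : Fin M → Ω => (S x).det) := by
    rw [funext hdet]
    exact integrable_finset_sum _ fun r hr => (hterm r hr).1
  have hval : (∫ x : Fin M → Ω, (S x).det) = (M.descFactorial m : ℂ) := by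
    rw [funext hdet, integral_finset_sum _ fun r hr => (hterm r hr).1,
      Finset.sum_congr rfl fun r hr => (hterm r hr).2]
    rw [Finset.sum_const, card_injective_eq, nsmul_eq_mul, mul_one]
  have hsmul : ∀ x : Fin M → Ω,
      ((M : ℂ)⁻¹ • S x).det = ((M : ℂ)⁻¹) ^ m * (S x).det := by
    intro x
    rw [Matrix.det_smul]
    simp
  have hint2 : Integrable (fun x : Fin M → Ω => (((M : ℂ)⁻¹ • S x).det).re) := by
    have h1 : Integrable (fun x : Fin M → Ω => ((M : ℂ)⁻¹) ^ m * (S x).det) :=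
      hint.const_mul _
    have h2 := h1.re
    apply h2.congr
    filter_upwards with x
    rw [hsmul, RCLike.re_to_complex]
  have hval2 : (∫ x : Fin M → Ω, (((M : ℂ)⁻¹ • S x).det).re)
      = (M.descFactorial m : ℝ) / (M : ℝ) ^ m := by
    have h1 : Integrable (fun x : Fin M → Ω => ((M : ℂ)⁻¹) ^ m * (S x).det) :=
      hint.const_mul _
    calc (∫ x : Fin M → Ω, (((M : ℂ)⁻¹ • S x).det).re)
        = ∫ x : Fin M → Ω, RCLike.re (((M : ℂ)⁻¹) ^ m * (S x).det) := by
          apply integral_congr_ae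
          filter_upwards with x
          rw [hsmul, RCLike.re_to_complex]
      _ = RCLike.re (∫ x : Fin M → Ω, ((M : ℂ)⁻¹) ^ m * (S x).det) := integral_re h1
      _ = (((M : ℂ)⁻¹) ^ m * (M.descFactorial m : ℂ)).re := by
          rw [integral_const_mul _ _, hval, RCLike.re_to_complex]
      _ = (M.descFactorial m : ℝ) / (M : ℝ) ^ m := by
          rw [show ((M : ℂ)⁻¹) ^ m * (M.descFactorial m : ℂ)
              = (((M.descFactorial m : ℝ) / (M : ℝ) ^ m : ℝ) : ℂ) by
            push_cast
            ring]
          exact Complex.ofReal_re _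
  obtain ⟨x, hx⟩ := exists_integral_le hint2
  refine ⟨x, ?_⟩
  rw [hval2] at hx
  exact le_trans (le_of_lt hMc) hx
end

section
/- Let Ω be a compact topological space, μ a Borel probability measure on Ω, and φ₁,…,φₙ : Ω → ℂ continuous functions that are orthonormal in L₂(μ). Then there exist N ≤ n² points x₁,…,x_{N+1} ∈ Ω and nonnegative weights μ₁,…,μ_{N+1} summing to 1 such that ∑_{i=1}^{N+1} μ_i φ_k(x_i) conj(φ_l(x_i)) = δ_{k,l} for all 1 ≤ k,l ≤ n. -/
open MeasureTheory

lemma aux_sum_pad {V : Type*} [AddCommMonoid V] {ι : Type*} [Fintype ι]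
    {m d : ℕ} (hm : m ≤ d) (e : ι ≃ Fin m) (f : ι → V) :
    (∑ j : Fin d, if h : (j : ℕ) < m then f (e.symm ⟨(j : ℕ), h⟩) else 0)
      = ∑ i, f i := by
  have h1 : (∑ j : Fin d, if h : (j : ℕ) < m then f (e.symm ⟨(j : ℕ), h⟩) else 0)
      = ∑ j ∈ Finset.range d,
          (fun j => if h : j < m then f (e.symm ⟨j, h⟩) else 0) j :=
    Fin.sum_univ_eq_sum_range (fun j => if h : j < m then f (e.symm ⟨j, h⟩) else 0) d
  rw [h1, ← Finset.sum_subset (Finset.range_subset_range.mpr hm)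
    (fun x _ hx => by rw [dif_neg (by simpa using hx)])]
  rw [← Fin.sum_univ_eq_sum_range (fun j => if h : j < m then f (e.symm ⟨j, h⟩) else 0) m]
  rw [← Equiv.sum_comp e.symm f]
  exact Finset.sum_congr rfl fun j _ => by simp [j.isLt]

lemma aux_isCompact_convexHull {E : Type*} [NormedAddCommGroup E] [NormedSpace ℝ E]
    [FiniteDimensional ℝ E] {s : Set E} (hs : IsCompact s) :
    IsCompact (convexHull ℝ s) := by
  rcases s.eq_empty_or_nonempty with rfl | ⟨x₀, hx₀⟩
  · simp only [convexHull_empty]; exact isCompact_empty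
  set d := Module.finrank ℝ E + 1 with hd
  set T : ((Fin d → ℝ) × (Fin d → E)) → E := fun p => ∑ i, p.1 i • p.2 i with hT
  have hTc : Continuous T := continuous_finset_sum _ fun i _ =>
    (((continuous_apply i).comp continuous_fst).smul
      ((continuous_apply i).comp continuous_snd))
  have hK : IsCompact ((stdSimplex ℝ (Fin d)) ×ˢ Set.univ.pi fun _ : Fin d => s) :=
    (isCompact_stdSimplex ℝ _).prod (isCompact_univ_pi fun _ => hs)
  have himg : convexHull ℝ s
      = T '' ((stdSimplex ℝ (Fin d)) ×ˢ Set.univ.pi fun _ : Fin d => s) := by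
    apply Set.Subset.antisymm
    · intro x hx
      obtain ⟨ι, hfin, z, w, hrange, hai, hpos, hsum, hx⟩ :=
        eq_pos_convex_span_of_mem_convexHull hx
      have hm : Fintype.card ι ≤ d := by
        have h2 := hai.card_le_finrank_succ
        have h3 := Submodule.finrank_le (vectorSpan ℝ (Set.range z))
        omega
      let e : ι ≃ Fin (Fintype.card ι) := Fintype.equivFin ι
      refine ⟨(fun j => if h : (j : ℕ) < Fintype.card ι then w (e.symm ⟨(j : ℕ), h⟩) else 0,
               fun j => if h : (j : ℕ) < Fintype.card ι then z (e.symm ⟨(j : ℕ), h⟩) else x₀),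
               ⟨⟨fun j => ?_, ?_⟩, fun j _ => ?_⟩, ?_⟩
      · dsimp only
        split
        · exact (hpos _).le
        · exact le_refl 0
      · exact (aux_sum_pad hm e w).trans hsum
      · dsimp only
        split
        · exact hrange (Set.mem_range_self _)
        · exact hx₀
      · rw [← hx, hT]
        dsimp only
        rw [← aux_sum_pad hm e (fun i => w i • z i)]
        refine Finset.sum_congr rfl fun j _ => ?_
        by_cases h : (j : ℕ) < Fintype.card ι
        · rw [dif_pos h, dif_pos h, dif_pos h]
        · rw [dif_neg h, dif_neg h, dif_neg h, zero_smul]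
    · rintro _ ⟨⟨wv, zv⟩, ⟨hw, hz⟩, rfl⟩
      exact (convex_convexHull ℝ s).sum_mem (fun i _ => hw.1 i) hw.2
        (fun i _ => subset_convexHull ℝ s (hz i (Set.mem_univ i)))
  rw [himg]
  exact hK.image hTc

/-- Continuous functions orthonormal w.r.t. a Borel probability measure on a compact
space remain orthonormal w.r.t. a discrete probability measure with at most `N+1 ≤ n²+1`
atoms. -/
theorem stmt_9 {Ω : Type*} [TopologicalSpace Ω] [CompactSpace Ω]
    [MeasurableSpace Ω] [BorelSpace Ω]
    (μ : Measure Ω) [IsProbabilityMeasure μ]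
    (n : ℕ) (φ : Fin n → Ω → ℂ) (hcont : ∀ k, Continuous (φ k))
    (horth : ∀ k l, ∫ x, φ k x * star (φ l x) ∂μ = if k = l then 1 else 0) :
    ∃ N ≤ n ^ 2, ∃ (x : Fin (N + 1) → Ω) (w : Fin (N + 1) → ℝ),
      (∀ i, 0 ≤ w i) ∧ (∑ i, w i = 1) ∧
      ∀ k l, ∑ i, (w i : ℂ) * (φ k (x i) * star (φ l (x i)))
        = if k = l then 1 else 0 := by
  classical
  set G : Ω → (Fin n × Fin n) → ℝ := fun a p =>
    if p.1 ≤ p.2 then (φ p.1 a * star (φ p.2 a)).re else (φ p.1 a * star (φ p.2 a)).im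
    with hG
  have hφc : ∀ k l : Fin n, Continuous fun a => φ k a * star (φ l a) := fun k l =>
    (hcont k).mul (hcont l).star
  have hGc : Continuous G := by
    apply continuous_pi
    intro p
    simp only [hG]
    split
    · exact Complex.continuous_re.comp (hφc p.1 p.2)
    · exact Complex.continuous_im.comp (hφc p.1 p.2)
  have hφint : ∀ k l : Fin n, Integrable (fun a => φ k a * star (φ l a)) μ := fun k l =>
    integrableOn_univ.mp (((hφc k l).locallyIntegrable).integrableOn_isCompact isCompact_univ)
  have hGint : Integrable G μ :=
    integrableOn_univ.mp ((hGc.locallyIntegrable).integrableOn_isCompact isCompact_univ)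
  have hmem : (∫ a, G a ∂μ) ∈ convexHull ℝ (Set.range G) :=
    (convex_convexHull ℝ _).integral_mem
      (aux_isCompact_convexHull (isCompact_range hGc)).isClosed
      (Filter.Eventually.of_forall fun a => subset_convexHull ℝ _ (Set.mem_range_self a)) hGint
  obtain ⟨ι, hfin, z, w, hrange, hai, hpos, hsum, hInt⟩ :=
    eq_pos_convex_span_of_mem_convexHull hmem
  have hfrk : Module.finrank ℝ ((Fin n × Fin n) → ℝ) = n ^ 2 := by
    rw [Module.finrank_pi]
    simp [Fintype.card_prod, sq]
  have hcard : Fintype.card ι ≤ n ^ 2 + 1 := by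
    have h2 := hai.card_le_finrank_succ
    have h3 := Submodule.finrank_le (vectorSpan ℝ (Set.range z))
    omega
  have hne : Fintype.card ι ≠ 0 := by
    intro h
    have hie : IsEmpty ι := Fintype.card_eq_zero_iff.mp h
    rw [Finset.sum_of_isEmpty] at hsum
    norm_num at hsum
  refine ⟨Fintype.card ι - 1, by omega, ?_⟩
  have hcard' : Fintype.card ι = (Fintype.card ι - 1) + 1 := by omega
  let e : ι ≃ Fin (Fintype.card ι - 1 + 1) := Fintype.equivFinOfCardEq hcard'
  choose xs hxs using fun i => hrange (Set.mem_range_self (f := z) i)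
  refine ⟨xs ∘ e.symm, w ∘ e.symm, fun j => (hpos _).le, ?_, ?_⟩
  · rw [← hsum]
    exact Equiv.sum_comp e.symm w
  · -- the key componentwise identity
    have hkey : ∀ p : Fin n × Fin n,
        (∑ j, w (e.symm j) * G (xs (e.symm j)) p) = ∫ a, G a p ∂μ := by
      intro p
      have h1 : (∑ j, w (e.symm j) * G (xs (e.symm j)) p) = ∑ i, w i * z i p := by
        rw [← Equiv.sum_comp e.symm (fun i => w i * z i p)]
        exact Finset.sum_congr rfl fun j _ => by rw [hxs]
      have h2 : (∑ i, w i * z i p) = (∑ i, w i • z i) p := by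
        rw [Finset.sum_apply]
        rfl
      rw [h1, h2, hInt]
      exact ((ContinuousLinearMap.proj (R := ℝ)
        (φ := fun _ : Fin n × Fin n => ℝ) p).integral_comp_comm hGint).symm
    have hIre : ∀ k l : Fin n,
        (∫ a, (φ k a * star (φ l a)).re ∂μ) = (if k = l then (1:ℝ) else 0) := by
      intro k l
      have h := integral_re (μ := μ) (hφint k l)
      simp only [RCLike.re_to_complex] at h
      rw [h, horth k l]
      split <;> simp
    have hIim : ∀ k l : Fin n, (∫ a, (φ k a * star (φ l a)).im ∂μ) = 0 := by
      intro k l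
      have h := integral_im (μ := μ) (hφint k l)
      simp only [RCLike.im_to_complex] at h
      rw [h, horth k l]
      split <;> simp
    have hconj : ∀ (k l : Fin n) (a : Ω),
        φ l a * star (φ k a) = star (φ k a * star (φ l a)) := by
      intro k l a
      rw [star_mul, star_star]
    intro k l
    simp only [Function.comp_apply]
    apply Complex.ext
    · -- real parts
      rw [Complex.re_sum]
      have hre : ∀ j, ((w (e.symm j) : ℂ) * (φ k (xs (e.symm j)) * star (φ l (xs (e.symm j))))).re
          = w (e.symm j) * (φ k (xs (e.symm j)) * star (φ l (xs (e.symm j)))).re := fun j =>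
        Complex.re_ofReal_mul _ _
      rw [Finset.sum_congr rfl fun j _ => hre j]
      by_cases hkl : k ≤ l
      · have h1 : ∀ j : Fin (Fintype.card ι - 1 + 1),
            (φ k (xs (e.symm j)) * star (φ l (xs (e.symm j)))).re
              = G (xs (e.symm j)) (k, l) := by
          intro j
          simp only [hG, if_pos hkl]
        rw [Finset.sum_congr rfl fun j _ => by rw [h1 j], hkey (k, l)]
        have h2 : (∫ a, G a (k, l) ∂μ) = ∫ a, (φ k a * star (φ l a)).re ∂μ := by
          refine integral_congr_ae (Filter.Eventually.of_forall fun a => ?_)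
          simp only [hG, if_pos hkl]
        rw [h2, hIre k l]
        split <;> simp
      · have hlk : l ≤ k := le_of_not_ge hkl
        have hswap : ∀ a : Ω, (φ k a * star (φ l a)).re = (φ l a * star (φ k a)).re := by
          intro a
          rw [hconj k l a]
          simp [Complex.star_def]
        have h1 : ∀ j : Fin (Fintype.card ι - 1 + 1),
            (φ k (xs (e.symm j)) * star (φ l (xs (e.symm j)))).re
              = G (xs (e.symm j)) (l, k) := by
          intro j
          rw [hswap]
          simp only [hG, if_pos hlk]
        rw [Finset.sum_congr rfl fun j _ => by rw [h1 j], hkey (l, k)]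
        have h2 : (∫ a, G a (l, k) ∂μ) = ∫ a, (φ l a * star (φ k a)).re ∂μ := by
          refine integral_congr_ae (Filter.Eventually.of_forall fun a => ?_)
          simp only [hG, if_pos hlk]
        rw [h2, hIre l k]
        rcases eq_or_ne k l with h | h
        · simp [h]
        · simp [h, h.symm]
    · -- imaginary parts
      rw [Complex.im_sum]
      have him : ∀ j, ((w (e.symm j) : ℂ) * (φ k (xs (e.symm j)) * star (φ l (xs (e.symm j))))).im
          = w (e.symm j) * (φ k (xs (e.symm j)) * star (φ l (xs (e.symm j)))).im := fun j =>
        Complex.im_ofReal_mul _ _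
      rw [Finset.sum_congr rfl fun j _ => him j]
      have hrhs : (if k = l then (1:ℂ) else 0).im = 0 := by split <;> simp
      rw [hrhs]
      by_cases hkl : k = l
      · subst hkl
        have h0 : ∀ a : Ω, (φ k a * star (φ k a)).im = 0 := by
          intro a
          rw [Complex.star_def, Complex.mul_conj]
          simp
        rw [Finset.sum_congr rfl fun j _ => by rw [h0 (xs (e.symm j)), mul_zero]]
        exact Finset.sum_const_zero
      · by_cases hle : k ≤ l
        · have hnlk : ¬ l ≤ k := fun h => hkl (le_antisymm hle h)
          have hswap : ∀ a : Ω, (φ k a * star (φ l a)).im = -(φ l a * star (φ k a)).im := by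
            intro a
            rw [hconj k l a]
            simp [Complex.star_def]
            ring
          have h1 : ∀ j : Fin (Fintype.card ι - 1 + 1),
              w (e.symm j) * (φ k (xs (e.symm j)) * star (φ l (xs (e.symm j)))).im
                = -(w (e.symm j) * G (xs (e.symm j)) (l, k)) := by
            intro j
            rw [hswap]
            simp only [hG, if_neg hnlk]
            ring
          rw [Finset.sum_congr rfl fun j _ => h1 j, Finset.sum_neg_distrib, hkey (l, k)]
          have h2 : (∫ a, G a (l, k) ∂μ) = ∫ a, (φ l a * star (φ k a)).im ∂μ := by
            refine integral_congr_ae (Filter.Eventually.of_forall fun a => ?_)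
            simp only [hG, if_neg hnlk]
          rw [h2, hIim l k, neg_zero]
        · have h1 : ∀ j : Fin (Fintype.card ι - 1 + 1),
              (φ k (xs (e.symm j)) * star (φ l (xs (e.symm j)))).im
                = G (xs (e.symm j)) (k, l) := by
            intro j
            simp only [hG, if_neg hle]
          rw [Finset.sum_congr rfl fun j _ => by rw [h1 j], hkey (k, l)]
          have h2 : (∫ a, G a (k, l) ∂μ) = ∫ a, (φ k a * star (φ l a)).im ∂μ := by
            refine integral_congr_ae (Filter.Eventually.of_forall fun a => ?_)
            simp only [hG, if_neg hle]
          rw [h2, hIim k l]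
end
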